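/- Let M be the 2×3 integer matrix with columns m₁ = (x₁,y₁), m₂ = (x₂,y₂), m₃ = (x₃,y₃), all with positive first coordinates and y₁/x₁ < y₂/x₂ < y₃/x₃. Define Y₁₂ = x₁y₂ - y₁x₂, Y₁₃ = x₁y₃ - y₁x₃, Y₂₃ = x₂y₃ - y₂x₃. Then the truncated power T satisfies: for (x,y) in the closed cone spanned by m₁ and m₂, T((x,y)|M) = (yx₁ - xy₁)/(Y₁₂·Y₁₃), and for (x,y) in the closed cone spanned by m₂ and m₃, T((x,y)|M) = (xy₃ - yx₃)/(Y₂₃·Y₁₃). -/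

import Mathlib

open MeasureTheory

/-- Truncated power of a 2×2 matrix with columns `m1, m2`:
`1/|det|` on the closed cone spanned by the columns, `0` elsewhere. -/
noncomputable def T2 (m1 m2 x : ℝ × ℝ) : ℝ :=
  open Classical in
  if ∃ a b : ℝ, 0 ≤ a ∧ 0 ≤ b ∧ x = a • m1 + b • m2 then
    |m1.1 * m2.2 - m1.2 * m2.1|⁻¹
  else 0

/-- The multivariate truncated power of a `2×n` matrix (`n ≥ 2`), given by the
columns as a list, defined by integrating out columns one at a time:
`T(x | m :: M) = ∫_{t>0} T(x - t m | M) dt`. -/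
noncomputable def Ttp : List (ℝ × ℝ) → (ℝ × ℝ) → ℝ
  | [m1, m2] => T2 m1 m2
  | m :: m' :: m'' :: rest => fun x =>
      ∫ t in Set.Ioi (0 : ℝ), Ttp (m' :: m'' :: rest) (x - t • m)
  | _ => fun _ => 0

/-- Cone membership characterized by sign conditions on determinants. -/
lemma cone_iff_aux (X2 Y2 X3 Y3 : ℝ) (hD : 0 < X2 * Y3 - Y2 * X3) (z : ℝ × ℝ) :
    (∃ a b : ℝ, 0 ≤ a ∧ 0 ≤ b ∧ z = a • ((X2, Y2) : ℝ × ℝ) + b • ((X3, Y3) : ℝ × ℝ))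
      ↔ 0 ≤ z.1 * Y3 - z.2 * X3 ∧ 0 ≤ X2 * z.2 - Y2 * z.1 := by
  constructor
  · rintro ⟨a, b, ha, hb, hz⟩
    have h1 : z.1 = a * X2 + b * X3 := by rw [hz]; simp [Prod.smul_def]
    have h2 : z.2 = a * Y2 + b * Y3 := by rw [hz]; simp [Prod.smul_def]
    constructor
    · have : z.1 * Y3 - z.2 * X3 = a * (X2 * Y3 - Y2 * X3) := by rw [h1, h2]; ring
      rw [this]; positivity
    · have : X2 * z.2 - Y2 * z.1 = b * (X2 * Y3 - Y2 * X3) := by rw [h1, h2]; ring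
      rw [this]; positivity
  · rintro ⟨h1, h2⟩
    have hD' : (X2 * Y3 - Y2 * X3) ≠ 0 := ne_of_gt hD
    refine ⟨(z.1 * Y3 - z.2 * X3) / (X2 * Y3 - Y2 * X3),
      (X2 * z.2 - Y2 * z.1) / (X2 * Y3 - Y2 * X3),
      div_nonneg h1 hD.le, div_nonneg h2 hD.le, ?_⟩
    ext
    · simp only [Prod.fst_add, Prod.smul_fst, smul_eq_mul]
      rw [div_mul_eq_mul_div, div_mul_eq_mul_div, ← add_div, eq_div_iff hD']
      ring
    · simp only [Prod.snd_add, Prod.smul_snd, smul_eq_mul]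
      rw [div_mul_eq_mul_div, div_mul_eq_mul_div, ← add_div, eq_div_iff hD']
      ring

lemma T2_eq_aux (X2 Y2 X3 Y3 : ℝ) (hD : 0 < X2 * Y3 - Y2 * X3) (z : ℝ × ℝ) :
    T2 (X2, Y2) (X3, Y3) z =
      if 0 ≤ z.1 * Y3 - z.2 * X3 ∧ 0 ≤ X2 * z.2 - Y2 * z.1 then (X2 * Y3 - Y2 * X3)⁻¹
      else 0 := by
  rw [T2]
  simp only [cone_iff_aux X2 Y2 X3 Y3 hD z]
  congr 1
  rw [abs_of_pos hD]

/-- The key integral computation. -/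
lemma Ttp_eq_aux (X1 Y1 X2 Y2 X3 Y3 : ℝ)
    (hD : 0 < X2 * Y3 - Y2 * X3) (h12 : 0 < X1 * Y2 - Y1 * X2)
    (h13 : 0 < X1 * Y3 - Y1 * X3) (x y : ℝ) :
    Ttp [(X1, Y1), (X2, Y2), (X3, Y3)] (x, y)
      = (X2 * Y3 - Y2 * X3)⁻¹ *
        (volume (Set.Icc ((Y2 * x - X2 * y) / (X1 * Y2 - Y1 * X2))
            ((x * Y3 - y * X3) / (X1 * Y3 - Y1 * X3)) ∩ Set.Ioi 0)).toReal := by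
  set l := (Y2 * x - X2 * y) / (X1 * Y2 - Y1 * X2) with hl
  set u := (x * Y3 - y * X3) / (X1 * Y3 - Y1 * X3) with hu
  have step1 : Ttp [(X1, Y1), (X2, Y2), (X3, Y3)] (x, y)
      = ∫ t in Set.Ioi (0 : ℝ), T2 (X2, Y2) (X3, Y3) ((x, y) - t • (X1, Y1)) := by
    rw [Ttp]; rfl
  rw [step1]
  have key : ∀ t : ℝ, T2 (X2, Y2) (X3, Y3) ((x, y) - t • (X1, Y1))
      = (Set.Icc l u).indicator (fun _ => (X2 * Y3 - Y2 * X3)⁻¹) t := by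
    intro t
    rw [T2_eq_aux X2 Y2 X3 Y3 hD]
    have hz1 : ((x, y) - t • ((X1, Y1) : ℝ × ℝ)).1 = x - t * X1 := rfl
    have hz2 : ((x, y) - t • ((X1, Y1) : ℝ × ℝ)).2 = y - t * Y1 := rfl
    rw [hz1, hz2]
    by_cases hmem : t ∈ Set.Icc l u
    · rw [Set.indicator_of_mem hmem]
      obtain ⟨htl, htu⟩ := hmem
      rw [if_pos]
      constructor
      · rw [hu, le_div_iff₀ h13] at htu
        nlinarith
      · rw [hl, div_le_iff₀ h12] at htl
        nlinarith
    · rw [Set.indicator_of_notMem hmem]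
      rw [if_neg]
      intro ⟨hA, hB⟩
      apply hmem
      constructor
      · rw [hl, div_le_iff₀ h12]
        nlinarith
      · rw [hu, le_div_iff₀ h13]
        nlinarith
  rw [integral_congr_ae (Filter.Eventually.of_forall key)]
  rw [MeasureTheory.integral_indicator_const _ measurableSet_Icc,
    measureReal_restrict_apply measurableSet_Icc, smul_eq_mul, mul_comm]
  rfl

theorem truncatedPower_two_by_three_explicit
    (x1 y1 x2 y2 x3 y3 : ℤ)
    (hx1 : 0 < x1) (hx2 : 0 < x2) (hx3 : 0 < x3)
    (h12 : y1 * x2 < y2 * x1) (h23 : y2 * x3 < y3 * x2)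
    (m1 m2 m3 : ℝ × ℝ)
    (hm1 : m1 = ((x1 : ℝ), (y1 : ℝ)))
    (hm2 : m2 = ((x2 : ℝ), (y2 : ℝ)))
    (hm3 : m3 = ((x3 : ℝ), (y3 : ℝ))) :
    (∀ x y : ℝ, (∃ a b : ℝ, 0 ≤ a ∧ 0 ≤ b ∧ (x, y) = a • m1 + b • m2) →
      Ttp [m1, m2, m3] (x, y)
        = (y * (x1 : ℝ) - x * (y1 : ℝ)) /
            (((x1 * y2 - y1 * x2) * (x1 * y3 - y1 * x3) : ℤ) : ℝ)) ∧
    (∀ x y : ℝ, (∃ a b : ℝ, 0 ≤ a ∧ 0 ≤ b ∧ (x, y) = a • m2 + b • m3) →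
      Ttp [m1, m2, m3] (x, y)
        = (x * (y3 : ℝ) - y * (x3 : ℝ)) /
            (((x2 * y3 - y2 * x3) * (x1 * y3 - y1 * x3) : ℤ) : ℝ)) := by
  subst hm1 hm2 hm3
  set X1 := (x1 : ℝ); set Y1 := (y1 : ℝ)
  set X2 := (x2 : ℝ); set Y2 := (y2 : ℝ)
  set X3 := (x3 : ℝ); set Y3 := (y3 : ℝ)
  have hX1 : 0 < X1 := by show (0:ℝ) < (x1:ℝ); exact_mod_cast hx1
  have hX2 : 0 < X2 := by show (0:ℝ) < (x2:ℝ); exact_mod_cast hx2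
  have hX3 : 0 < X3 := by show (0:ℝ) < (x3:ℝ); exact_mod_cast hx3
  have h12' : Y1 * X2 < Y2 * X1 := by
    show (y1:ℝ) * (x2:ℝ) < (y2:ℝ) * (x1:ℝ); exact_mod_cast h12
  have h23' : Y2 * X3 < Y3 * X2 := by
    show (y2:ℝ) * (x3:ℝ) < (y3:ℝ) * (x2:ℝ); exact_mod_cast h23
  have hD12 : 0 < X1 * Y2 - Y1 * X2 := by nlinarith
  have hD23 : 0 < X2 * Y3 - Y2 * X3 := by nlinarith
  have hD13 : 0 < X1 * Y3 - Y1 * X3 := by nlinarith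
  constructor
  · rintro x y ⟨a, b, ha, hb, hxy⟩
    have hx : x = a * X1 + b * X2 := by
      have := congrArg Prod.fst hxy; simpa using this
    have hy : y = a * Y1 + b * Y2 := by
      have := congrArg Prod.snd hxy; simpa using this
    rw [Ttp_eq_aux X1 Y1 X2 Y2 X3 Y3 hD23 hD12 hD13]
    have hleq : (Y2 * x - X2 * y) / (X1 * Y2 - Y1 * X2) = a := by
      rw [hx, hy]; rw [div_eq_iff hD12.ne']; ring
    have hueq : (x * Y3 - y * X3) / (X1 * Y3 - Y1 * X3)
        = a + b * (X2 * Y3 - Y2 * X3) / (X1 * Y3 - Y1 * X3) := by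
      rw [hx, hy]; field_simp; ring
    rw [hleq, hueq]
    set c := b * (X2 * Y3 - Y2 * X3) / (X1 * Y3 - Y1 * X3) with hc
    have hc0 : 0 ≤ c := by positivity
    have hvol : volume (Set.Icc a (a + c) ∩ Set.Ioi 0) = ENNReal.ofReal c := by
      apply le_antisymm
      · calc volume (Set.Icc a (a + c) ∩ Set.Ioi 0) ≤ volume (Set.Icc a (a + c)) :=
              measure_mono Set.inter_subset_left
          _ = ENNReal.ofReal c := by rw [Real.volume_Icc]; ring_nf
      · calc ENNReal.ofReal c = volume (Set.Ioc a (a + c)) := by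
              rw [Real.volume_Ioc]; ring_nf
          _ ≤ volume (Set.Icc a (a + c) ∩ Set.Ioi 0) := by
              apply measure_mono
              rintro t ⟨ht1, ht2⟩
              exact ⟨⟨ht1.le, ht2⟩, lt_of_le_of_lt ha ht1⟩
    rw [hvol, ENNReal.toReal_ofReal hc0]
    rw [hx, hy, hc]
    push_cast
    rw [show (X2 * Y3 - Y2 * X3)⁻¹ * (b * (X2 * Y3 - Y2 * X3) / (X1 * Y3 - Y1 * X3))
        = b / (X1 * Y3 - Y1 * X3) by field_simp]
    rw [div_eq_div_iff hD13.ne' (show ((x1:ℝ) * y2 - y1 * x2) * ((x1:ℝ) * y3 - y1 * x3) ≠ 0 from mul_ne_zero hD12.ne' hD13.ne')]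
    ring
  · rintro x y ⟨a, b, ha, hb, hxy⟩
    have hx : x = a * X2 + b * X3 := by
      have := congrArg Prod.fst hxy; simpa using this
    have hy : y = a * Y2 + b * Y3 := by
      have := congrArg Prod.snd hxy; simpa using this
    rw [Ttp_eq_aux X1 Y1 X2 Y2 X3 Y3 hD23 hD12 hD13]
    set l := (Y2 * x - X2 * y) / (X1 * Y2 - Y1 * X2) with hldef
    set u := (x * Y3 - y * X3) / (X1 * Y3 - Y1 * X3) with hudef
    have hl0 : l ≤ 0 := by
      rw [hldef]
      apply div_nonpos_of_nonpos_of_nonneg _ hD12.le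
      rw [hx, hy]
      nlinarith [mul_nonneg hb hD23.le]
    have hueq : u = a * (X2 * Y3 - Y2 * X3) / (X1 * Y3 - Y1 * X3) := by
      rw [hudef, hx, hy]; field_simp; ring
    have hu0 : 0 ≤ u := by rw [hueq]; positivity
    have hset : Set.Icc l u ∩ Set.Ioi 0 = Set.Ioc 0 u := by
      ext t
      simp only [Set.mem_inter_iff, Set.mem_Icc, Set.mem_Ioi, Set.mem_Ioc]
      constructor
      · rintro ⟨⟨_, h2⟩, h3⟩; exact ⟨h3, h2⟩
      · rintro ⟨h1, h2⟩; exact ⟨⟨le_trans hl0 h1.le, h2⟩, h1⟩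
    rw [hset, Real.volume_Ioc, sub_zero, ENNReal.toReal_ofReal hu0, hueq, hx, hy]
    push_cast
    field_simp [show ((x2:ℝ) * y3 - y2 * x3) ≠ 0 from hD23.ne', show ((x1:ℝ) * y3 - y1 * x3) ≠ 0 from hD13.ne']
    ring
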